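/- Let A be an M×M real matrix with eᵀA = 0 such that J A H is invertible. Then the vector p_∞ = (I_M − H (J A H)^{-1} J A) e_M is the UNIQUE vector p ∈ ℝ^M satisfying both A p = 0 and eᵀ p = 1. -/

import Mathlib

open Matrix

/-- The all-but-last-row identity matrix `J` (size `(M-1) × M`). -/
noncomputable def J (M : ℕ) : Matrix (Fin (M - 1)) (Fin M) ℝ :=
  Matrix.of fun i j => if (i : ℕ) = (j : ℕ) then 1 else 0

/-- The matrix `H` (size `M × (M-1)`): identity on top, last row all `-1`. -/
noncomputable def H (M : ℕ) : Matrix (Fin M) (Fin (M - 1)) ℝ :=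
  Matrix.of fun i j => if (i : ℕ) = (j : ℕ) then 1 else if (i : ℕ) = M - 1 then -1 else 0

/-- The all-ones vector `e = (1,...,1)ᵀ`. -/
noncomputable def eVec (M : ℕ) : Fin M → ℝ := fun _ => 1

/-- The unit vector `e_M = (0,...,0,1)ᵀ`. -/
noncomputable def eM (M : ℕ) : Fin M → ℝ := fun i => if (i : ℕ) = M - 1 then 1 else 0

lemma sum_ite_val (M : ℕ) (c : ℕ) (hc : c < M) (r : ℝ) :
    ∑ i : Fin M, (if (i : ℕ) = c then r else 0) = r := by
  rw [Finset.sum_eq_single (⟨c, hc⟩ : Fin M)]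
  · simp
  · intro b _ hb; exact if_neg (fun h => hb (Fin.ext h))
  · simp

lemma eVec_vecMul_H (M : ℕ) : eVec M ᵥ* H M = 0 := by
  funext j
  have hj : (j : ℕ) < M - 1 := j.isLt
  have key : ∀ i : Fin M, H M i j =
      (if (i : ℕ) = (j : ℕ) then (1:ℝ) else 0) + (if (i : ℕ) = M - 1 then -1 else 0) := by
    intro i
    by_cases h1 : (i : ℕ) = (j : ℕ) <;> by_cases h2 : (i : ℕ) = M - 1
    · exact absurd (h1 ▸ h2) (by omega)
    · simp [H, h1, h2]; omega
    · simp [H, h1, h2]; split_ifs with h <;> [omega; ring]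
    · simp [H, h1, h2]
  simp only [vecMul, dotProduct, eVec, one_mul, Pi.zero_apply]
  rw [Finset.sum_congr rfl (fun i _ => key i), Finset.sum_add_distrib,
    sum_ite_val M (j:ℕ) (by omega), sum_ite_val M (M-1) (by omega)]
  ring

lemma HJ (M : ℕ) : H M * _root_.J M = 1 - vecMulVec (eM M) (eVec M) := by
  ext i j
  simp only [mul_apply, H, _root_.J, of_apply, Matrix.sub_apply, vecMulVec_apply, eM, eVec, one_apply,
    mul_one]
  by_cases hi : (i : ℕ) = M - 1
  · have key : ∀ k : Fin (M-1), (if (i:ℕ) = (k:ℕ) then (1:ℝ) else if (i:ℕ) = M - 1 then -1 else 0)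
        * (if (k:ℕ) = (j:ℕ) then 1 else 0) = if (k:ℕ) = (j:ℕ) then -1 else 0 := by
      intro k
      have hne : (i:ℕ) ≠ (k:ℕ) := by have := k.isLt; omega
      rw [if_neg hne, if_pos hi]
      by_cases hk : (k:ℕ) = (j:ℕ) <;> simp [hk]
    rw [Finset.sum_congr rfl (fun k _ => key k)]
    by_cases hj : (j : ℕ) < M - 1
    · rw [sum_ite_val (M-1) (j:ℕ) hj]
      have hij : i ≠ j := fun h => by rw [h] at hi; omega
      rw [if_neg hij, if_pos hi]
      ring
    · have hjm : (j : ℕ) = M - 1 := by have := j.isLt; omega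
      have hij : i = j := Fin.ext (by omega)
      rw [Finset.sum_congr rfl (fun k _ => by
        rw [if_neg (by have := k.isLt; omega : ¬ (k:ℕ) = (j:ℕ))]), Finset.sum_const_zero,
        if_pos hij, if_pos hi]
      ring
  · have hi' : (i : ℕ) < M - 1 := by have := i.isLt; omega
    have key : ∀ k : Fin (M-1), (if (i:ℕ) = (k:ℕ) then (1:ℝ) else if (i:ℕ) = M - 1 then -1 else 0)
        * (if (k:ℕ) = (j:ℕ) then 1 else 0)
        = if (k:ℕ) = (i:ℕ) then (if (i:ℕ) = (j:ℕ) then 1 else 0) else 0 := by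
      intro k
      by_cases hk : (i:ℕ) = (k:ℕ)
      · rw [if_pos hk, if_pos hk.symm, one_mul]
        by_cases h : (k:ℕ) = (j:ℕ)
        · rw [if_pos h, if_pos (hk.trans h)]
        · rw [if_neg h, if_neg (fun hh => h (hk ▸ hh))]
      · rw [if_neg hk, if_neg hi, zero_mul, if_neg (fun h => hk h.symm)]
    rw [Finset.sum_congr rfl (fun k _ => key k), sum_ite_val (M-1) (i:ℕ) hi', if_neg hi,
      show (if i = j then (1:ℝ) else 0) = (if (i:ℕ) = (j:ℕ) then 1 else 0) from by
        simp [Fin.ext_iff]]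
    ring

lemma eVec_dot_eM (M : ℕ) (hM : 2 ≤ M) : eVec M ⬝ᵥ eM M = 1 := by
  simp only [dotProduct, eVec, eM, one_mul]
  exact sum_ite_val M (M-1) (by omega) 1

lemma HJ_mulVec (M : ℕ) (x : Fin M → ℝ) (hx : eVec M ⬝ᵥ x = 0) :
    (H M * _root_.J M) *ᵥ x = x := by
  rw [HJ, sub_mulVec, one_mulVec]
  have h0 : vecMulVec (eM M) (eVec M) *ᵥ x = 0 := by
    funext i
    simp only [mulVec, dotProduct, vecMulVec_apply, Pi.zero_apply, mul_assoc]
    rw [← Finset.mul_sum]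
    simpa [dotProduct] using Or.inr hx
  rw [h0, sub_zero]

theorem stmt6 (M : ℕ) (hM : 2 ≤ M) (A : Matrix (Fin M) (Fin M) ℝ)
    (hA : eVec M ᵥ* A = 0)
    (hinv : IsUnit (J M * A * H M)) :
    ∀ p : Fin M → ℝ,
      (A *ᵥ p = 0 ∧ eVec M ⬝ᵥ p = 1) ↔
      p = (1 - H M * (J M * A * H M)⁻¹ * (J M * A)) *ᵥ eM M := by
  intro p
  set B := _root_.J M * A * H M with hB
  set P := (1 - H M * B⁻¹ * (_root_.J M * A)) with hP
  have hdet : IsUnit B.det := (Matrix.isUnit_iff_isUnit_det B).mp hinv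
  have hBl : B⁻¹ * B = 1 := Matrix.nonsing_inv_mul B hdet
  have hBr : B * B⁻¹ = 1 := Matrix.mul_nonsing_inv B hdet
  have hvP : eVec M ᵥ* P = eVec M := by
    rw [hP, vecMul_sub, vecMul_one, Matrix.mul_assoc, ← vecMul_vecMul,
      eVec_vecMul_H, zero_vecMul, sub_zero]
  have he1 : eVec M ⬝ᵥ (P *ᵥ eM M) = 1 := by
    rw [dotProduct_mulVec, hvP, eVec_dot_eM M hM]
  have hJAP : _root_.J M * (A * P) = 0 := by
    have h1 : _root_.J M * (A * P) =
        _root_.J M * A - B * B⁻¹ * (_root_.J M * A) := by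
      rw [hP, hB]
      simp only [Matrix.mul_sub, Matrix.mul_one, ← Matrix.mul_assoc]
    rw [h1, hBr, Matrix.one_mul, sub_self]
  have heAP : eVec M ᵥ* (A * P) = 0 := by
    rw [← vecMul_vecMul, hA, zero_vecMul]
  have hApinf : A *ᵥ (P *ᵥ eM M) = 0 := by
    set u := A *ᵥ (P *ᵥ eM M) with hu
    have hu' : u = (A * P) *ᵥ eM M := by rw [hu, mulVec_mulVec]
    have hJu : _root_.J M *ᵥ u = 0 := by
      rw [hu', mulVec_mulVec, hJAP, zero_mulVec]
    have heu : eVec M ⬝ᵥ u = 0 := by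
      rw [hu', dotProduct_mulVec, heAP, zero_dotProduct]
    calc u = (H M * _root_.J M) *ᵥ u := (HJ_mulVec M u heu).symm
      _ = H M *ᵥ (_root_.J M *ᵥ u) := (mulVec_mulVec _ _ _).symm
      _ = 0 := by rw [hJu, mulVec_zero]
  constructor
  · rintro ⟨hp1, hp2⟩
    set d := p - P *ᵥ eM M with hd
    have hed : eVec M ⬝ᵥ d = 0 := by rw [hd, dotProduct_sub, hp2, he1, sub_self]
    have hAd : A *ᵥ d = 0 := by rw [hd, mulVec_sub, hp1, hApinf, sub_self]
    have hdHJ : d = H M *ᵥ (_root_.J M *ᵥ d) := by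
      rw [mulVec_mulVec]; exact (HJ_mulVec M d hed).symm
    set q := _root_.J M *ᵥ d with hq
    have hBq : B *ᵥ q = 0 := by
      calc B *ᵥ q = (_root_.J M * A) *ᵥ (H M *ᵥ q) := by
            show (_root_.J M * A * H M) *ᵥ q = _
            exact (mulVec_mulVec _ _ _).symm
        _ = _root_.J M *ᵥ (A *ᵥ (H M *ᵥ q)) := (mulVec_mulVec _ _ _).symm
        _ = _root_.J M *ᵥ (A *ᵥ d) := by rw [← hdHJ]
        _ = 0 := by rw [hAd, mulVec_zero]
    have hq0 : q = 0 := by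
      have h2 := congrArg (fun v => B⁻¹ *ᵥ v) hBq
      simpa [mulVec_mulVec, hBl] using h2
    have hd0 : d = 0 := by rw [hdHJ, hq0, mulVec_zero]
    have := sub_eq_zero.mp hd0
    exact this
  · intro h; rw [h]; exact ⟨hApinf, he1⟩
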